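/- Let L be a topological space such that the countable power L^ω is c.c.c. Then for every cardinal κ and every open set U ⊆ L^κ (with the product topology) there is an open set V ⊆ U which is dense in U and is determined by a countable subset of κ. -/

import Mathlib

open Set Filter TopologicalSpace

/-- A space is c.c.c. if every family of pairwise disjoint nonempty open sets is countable. -/
def CCC (X : Type*) [TopologicalSpace X] : Prop :=
  ∀ 𝒰 : Set (Set X), (∀ U ∈ 𝒰, IsOpen U ∧ U.Nonempty) →
    𝒰.Pairwise (fun U V => Disjoint U V) → 𝒰.Countable

/-- A set `M ⊆ ι` determines `A ⊆ L^ι` if points of `A` and points outside `A` differ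
somewhere on `M`. -/
def Determines {ι L : Type*} (M : Set ι) (A : Set (ι → L)) : Prop :=
  ∀ x ∈ A, ∀ y ∉ A, ∃ m ∈ M, x m ≠ y m

/-- Δ-system lemma, bounded-cardinality version. -/
lemma delta_aux {ι : Type*} [DecidableEq ι] : ∀ (n : ℕ) (A : Set (Finset ι)), (∀ s ∈ A, s.card ≤ n) →
    ¬ A.Countable →
    ∃ B ⊆ A, ¬ B.Countable ∧ ∃ R : Finset ι, ∀ s ∈ B, ∀ t ∈ B, s ≠ t → s ∩ t = R := by
  classical
  intro n
  induction n with
  | zero =>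
    intro A hcard hA
    exact absurd ((Set.countable_singleton (∅ : Finset ι)).mono fun s hs => by
      simpa using Finset.card_eq_zero.1 (Nat.le_zero.1 (hcard s hs))) hA
  | succ n ih =>
    intro A hcard hA
    by_cases h : ∃ x, ¬ {s ∈ A | x ∈ s}.Countable
    · obtain ⟨x, hx⟩ := h
      set A₁ : Set (Finset ι) := {s ∈ A | x ∈ s} with hA₁
      have hinj : Set.InjOn (fun s => Finset.erase s x) A₁ := by
        intro s hs t ht hst
        have : insert x (s.erase x) = insert x (t.erase x) := by
          simp only at hst; rw [hst]
        rwa [Finset.insert_erase hs.2, Finset.insert_erase ht.2] at this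
      have hA' : ¬ ((fun s => Finset.erase s x) '' A₁).Countable := fun hc =>
        hx (Set.countable_of_injective_of_countable_image hinj hc)
      have hcard' : ∀ t ∈ (fun s => Finset.erase s x) '' A₁, t.card ≤ n := by
        rintro t ⟨s, hs, rfl⟩
        show (s.erase x).card ≤ n
        have h1 := Finset.card_erase_of_mem hs.2
        have h2 := hcard s hs.1
        omega
      obtain ⟨B', hB'sub, hB'unc, R', hR'⟩ := ih _ hcard' hA'
      refine ⟨{s ∈ A₁ | s.erase x ∈ B'}, fun s hs => hs.1.1, ?_, insert x R', ?_⟩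
      · intro hc
        apply hB'unc
        have : B' = (fun s => Finset.erase s x) '' {s ∈ A₁ | s.erase x ∈ B'} := by
          apply Set.Subset.antisymm
          · intro t ht
            obtain ⟨s, hs, rfl⟩ := hB'sub ht
            exact ⟨s, ⟨hs, ht⟩, rfl⟩
          · rintro t ⟨s, hs, rfl⟩; exact hs.2
        rw [this]
        exact hc.image _
      · intro s hs t ht hst
        have hne : s.erase x ≠ t.erase x := fun he => hst (hinj hs.1 ht.1 he)
        have hroot := hR' _ hs.2 _ ht.2 hne
        ext a
        by_cases hax : a = x
        · subst hax
          simp [hs.1.2, ht.1.2]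
        · simp only [Finset.mem_inter, Finset.mem_insert, hax, false_or]
          rw [← hroot]
          simp [Finset.mem_erase, hax]
    · push_neg at h
      set A₀ : Set (Finset ι) := A \ {∅} with hA₀def
      have hA₀ : ¬ A₀.Countable := fun hc =>
        hA (by
          have := hc.union (Set.countable_singleton (∅ : Finset ι))
          exact this.mono fun s hs => by
            by_cases h0 : s = ∅
            · exact Set.mem_union_right _ (by simp [h0])
            · exact Set.mem_union_left _ ⟨hs, by simp [h0]⟩)
      have hchains : ∀ c ⊆ {B : Set (Finset ι) | B ⊆ A₀ ∧ ∀ s ∈ B, ∀ t ∈ B, s ≠ t → s ∩ t = ∅},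
          IsChain (· ⊆ ·) c → ∃ ub ∈ {B : Set (Finset ι) | B ⊆ A₀ ∧
            ∀ s ∈ B, ∀ t ∈ B, s ≠ t → s ∩ t = ∅}, ∀ s ∈ c, s ⊆ ub := by
        intro c hc hchain
        refine ⟨⋃₀ c, ⟨?_, ?_⟩, fun s hs => Set.subset_sUnion_of_mem hs⟩
        · exact Set.sUnion_subset fun B hB => (hc hB).1
        · rintro s ⟨B₁, hB₁, hs⟩ t ⟨B₂, hB₂, ht⟩ hst
          rcases hchain.total hB₁ hB₂ with hle | hle
          · exact (hc hB₂).2 s (hle hs) t ht hst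
          · exact (hc hB₁).2 s hs t (hle ht) hst
      obtain ⟨B, hBmax⟩ := zorn_subset
        {B : Set (Finset ι) | B ⊆ A₀ ∧ ∀ s ∈ B, ∀ t ∈ B, s ≠ t → s ∩ t = ∅} hchains
      refine ⟨B, fun s hs => (hBmax.prop.1 hs).1, ?_, ∅, hBmax.prop.2⟩
      intro hBc
      set X : Set ι := ⋃ s ∈ B, (↑s : Set ι) with hXdef
      have hX : X.Countable := hBc.biUnion fun s _ => s.countable_toSet
      set bad : Set (Finset ι) := {s ∈ A | ∃ x ∈ X, x ∈ s} with hbaddef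
      have hbad : bad.Countable := by
        have : bad = ⋃ x ∈ X, {s ∈ A | x ∈ s} := by
          ext s; simp only [hbaddef, Set.mem_setOf_eq, Set.mem_iUnion]; tauto
        rw [this]
        exact hX.biUnion fun x _ => h x
      have hns : ¬ (A₀ \ bad).Countable := fun hc =>
        hA₀ ((hc.union hbad).mono fun s hs => by
          by_cases hmem : s ∈ bad
          · exact Set.mem_union_right _ hmem
          · exact Set.mem_union_left _ ⟨hs, hmem⟩)
      have hne : (A₀ \ bad).Nonempty :=
        Set.nonempty_iff_ne_empty.2 fun he => hns (he ▸ Set.countable_empty)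
      obtain ⟨s, hsA₀, hsbad⟩ := hne
      have hins : insert s B ∈
          {B | B ⊆ A₀ ∧ ∀ s ∈ B, ∀ t ∈ B, s ≠ t → s ∩ t = ∅} := by
        constructor
        · exact Set.insert_subset hsA₀ hBmax.prop.1
        · have key : ∀ t ∈ B, s ∩ t = ∅ := by
            intro t ht
            rw [Finset.eq_empty_iff_forall_notMem]
            intro a ha
            rw [Finset.mem_inter] at ha
            exact hsbad ⟨hsA₀.1, a, Set.mem_biUnion ht ha.2, ha.1⟩
          rintro u hu t htm hut
          rcases hu with rfl | hu
          · rcases htm with rfl | htm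
            · exact absurd rfl hut
            · exact key t htm
          · rcases htm with rfl | htm
            · rw [Finset.inter_comm]; exact key u hu
            · exact hBmax.prop.2 u hu t htm hut
      have hsB : s ∈ B := hBmax.2 hins (Set.subset_insert s B) (Set.mem_insert s B)
      obtain ⟨a, ha⟩ := Finset.nonempty_iff_ne_empty.2 (by simpa using hsA₀.2)
      exact hsbad ⟨hsA₀.1, a, Set.mem_biUnion hsB ha, ha⟩

/-- Δ-system lemma. -/
lemma delta_system {ι : Type*} [DecidableEq ι] (A : Set (Finset ι)) (hA : ¬ A.Countable) :
    ∃ B ⊆ A, ¬ B.Countable ∧ ∃ R : Finset ι, ∀ s ∈ B, ∀ t ∈ B, s ≠ t → s ∩ t = R := by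
  have : ∃ n, ¬ {s ∈ A | s.card = n}.Countable := by
    by_contra hc
    push_neg at hc
    apply hA
    have : A = ⋃ n, {s ∈ A | s.card = n} := by
      ext s; simp
    rw [this]
    exact Set.countable_iUnion hc
  obtain ⟨n, hn⟩ := this
  obtain ⟨B, hBsub, hB⟩ := delta_aux n {s ∈ A | s.card = n} (fun s hs => hs.2.le) hn
  exact ⟨B, fun s hs => (hBsub hs).1, hB⟩

/-- Δ-system lemma, function version. -/
lemma delta_system_fun {β ι : Type*} [DecidableEq ι] (S : Set β) (hS : ¬ S.Countable) (f : β → Finset ι) :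
    ∃ J ⊆ S, ¬ J.Countable ∧ ∃ R : Finset ι, ∀ a ∈ J, ∀ b ∈ J, a ≠ b → f a ∩ f b = R := by
  classical
  by_cases h : ∃ s₀, ¬ {a ∈ S | f a = s₀}.Countable
  · obtain ⟨s₀, hs₀⟩ := h
    exact ⟨{a ∈ S | f a = s₀}, fun a ha => ha.1, hs₀, s₀,
      fun a ha b hb _ => by rw [ha.2, hb.2, Finset.inter_self]⟩
  · push_neg at h
    have himg : ¬ (f '' S).Countable := by
      intro hc
      apply hS
      have : S = ⋃ s ∈ f '' S, {a ∈ S | f a = s} := by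
        ext a
        simp only [Set.mem_iUnion, Set.mem_setOf_eq, Set.mem_image]
        exact ⟨fun ha => ⟨f a, ⟨a, ha, rfl⟩, ha, rfl⟩, fun ⟨_, _, ha, _⟩ => ha⟩
      rw [this]
      exact hc.biUnion fun s _ => h s
    obtain ⟨B, hBsub, hBunc, R, hR⟩ := delta_system (f '' S) himg
    choose g hgS hgf using fun s (hs : s ∈ B) => hBsub hs
    set J : Set β := {a | ∃ s : Finset ι, ∃ hs : s ∈ B, a = g s hs} with hJ
    refine ⟨J, ?_, ?_, R, ?_⟩
    · rintro a ⟨s, hs, rfl⟩; exact hgS s hs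
    · intro hc
      apply hBunc
      have : B ⊆ f '' J := by
        intro s hs
        exact ⟨g s hs, ⟨s, hs, rfl⟩, hgf s hs⟩
      exact (hc.image f).mono this
    · rintro a ⟨s, hs, rfl⟩ b ⟨t, ht, rfl⟩ hab
      have hst : s ≠ t := fun he => hab (by subst he; rfl)
      rw [hgf s hs, hgf t ht]
      exact hR s hs t ht hst


/-- Proposition 16: if `L^ω` is c.c.c., then every open set `U` in a power `L^ι` contains
an open subset `V` which is dense in `U` and determined by a countable set of coordinates. -/
theorem stmt_15 (L : Type*) [TopologicalSpace L] (hccc : CCC (ℕ → L))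
    (ι : Type*) (U : Set (ι → L)) (hU : IsOpen U) :
    ∃ V : Set (ι → L), V ⊆ U ∧ IsOpen V ∧ Dense (Subtype.val ⁻¹' V : Set ↥U) ∧
      ∃ M : Set ι, M.Countable ∧ Determines M V := by
  classical
  -- boxes
  set Box : Finset ι × (ι → Set L) → Set (ι → L) :=
    fun p => {x | ∀ i ∈ p.1, x i ∈ p.2 i} with hBox
  have hBoxOpen : ∀ p : Finset ι × (ι → Set L), (∀ i ∈ p.1, IsOpen (p.2 i)) → IsOpen (Box p) := by
    intro p hp
    have : Box p = ⋂ i ∈ p.1, (fun x : ι → L => x i) ⁻¹' p.2 i := by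
      ext x; simp [hBox]
    rw [this]
    exact isOpen_biInter_finset fun i hi => (hp i hi).preimage (continuous_apply i)
  set Good : Set (Finset ι × (ι → Set L)) :=
    {p | (∀ i ∈ p.1, IsOpen (p.2 i)) ∧ (Box p).Nonempty ∧ Box p ⊆ U} with hGood
  -- a maximal pairwise-disjoint family of good boxes
  have hchains : ∀ c ⊆ {F : Set (Finset ι × (ι → Set L)) | F ⊆ Good ∧
        ∀ p ∈ F, ∀ q ∈ F, p ≠ q → Disjoint (Box p) (Box q)},
      IsChain (· ⊆ ·) c → ∃ ub ∈ {F : Set (Finset ι × (ι → Set L)) | F ⊆ Good ∧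
        ∀ p ∈ F, ∀ q ∈ F, p ≠ q → Disjoint (Box p) (Box q)}, ∀ s ∈ c, s ⊆ ub := by
    intro c hc hchain
    refine ⟨⋃₀ c, ⟨Set.sUnion_subset fun F hF => (hc hF).1, ?_⟩,
      fun s hs => Set.subset_sUnion_of_mem hs⟩
    rintro p ⟨F₁, hF₁, hp⟩ q ⟨F₂, hF₂, hq⟩ hpq
    rcases hchain.total hF₁ hF₂ with hle | hle
    · exact (hc hF₂).2 p (hle hp) q hq hpq
    · exact (hc hF₁).2 p hp q (hle hq) hpq
  obtain ⟨F, hFmax⟩ := zorn_subset _ hchains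
  have hFGood : F ⊆ Good := hFmax.prop.1
  have hFdisj : ∀ p ∈ F, ∀ q ∈ F, p ≠ q → Disjoint (Box p) (Box q) := hFmax.prop.2
  -- F is countable
  have hFc : F.Countable := by
    by_contra hF
    obtain ⟨J, hJF, hJunc, R, hR⟩ := delta_system_fun F hF (fun p => p.1)
    -- J has at least two elements
    have hJnt : ∀ p ∈ J, ∃ q ∈ J, q ≠ p := by
      intro p hp
      by_contra hq
      push_neg at hq
      exact hJunc ((Set.countable_singleton p).mono fun a ha => by simpa using hq a ha)
    obtain ⟨p₀, hp₀⟩ : J.Nonempty := Set.nonempty_iff_ne_empty.2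
      fun he => hJunc (by rw [he]; exact Set.countable_empty)
    obtain ⟨q₀, hq₀, hq₀p⟩ := hJnt p₀ hp₀
    obtain ⟨x₀, hx₀⟩ := (hFGood (hJF hp₀)).2.1
    obtain ⟨y₀, hy₀⟩ := (hFGood (hJF hq₀)).2.1
    have hxy : x₀ ≠ y₀ := by
      intro he
      exact (hFdisj _ (hJF hq₀) _ (hJF hp₀) hq₀p).ne_of_mem hy₀ (he ▸ hx₀) rfl
    have hιne : Nonempty ι := by
      by_contra hι
      exact hxy (funext fun i => absurd ⟨i⟩ hι)
    have hLne : Nonempty L := ⟨x₀ (Classical.arbitrary ι)⟩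
    -- R is contained in every support
    have hRsub : ∀ p ∈ J, (R : Set ι) ⊆ ↑p.1 := by
      intro p hp
      obtain ⟨q, hq, hqp⟩ := hJnt p hp
      have := hR p hp q hq (fun h => hqp h.symm)
      intro i hi
      rw [← this] at hi
      exact (Finset.mem_inter.1 hi).1
    -- disjointness witnessed inside R
    have hwit : ∀ p ∈ J, ∀ q ∈ J, p ≠ q → ∃ i ∈ R, p.2 i ∩ q.2 i = ∅ := by
      intro p hp q hq hpq
      by_contra hcon
      push_neg at hcon
      have hne : ∀ i ∈ R, (p.2 i ∩ q.2 i).Nonempty := hcon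
      obtain ⟨xp, hxp⟩ := (hFGood (hJF hp)).2.1
      obtain ⟨xq, hxq⟩ := (hFGood (hJF hq)).2.1
      set z : ι → L := fun i =>
        if h : i ∈ R then (hne i h).choose else if i ∈ p.1 then xp i else xq i with hz
      have hzp : z ∈ Box p := by
        intro i hi
        by_cases hiR : i ∈ R
        · simpa [hz, hiR] using ((hne i hiR).choose_spec).1
        · simp only [hz, hiR, dif_neg, not_false_iff, hi, if_pos]
          exact hxp i hi
      have hzq : z ∈ Box q := by
        intro i hi
        by_cases hiR : i ∈ R
        · simpa [hz, hiR] using ((hne i hiR).choose_spec).2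
        · have hip : i ∉ p.1 := by
            intro hip
            exact hiR (by rw [← hR p hp q hq hpq]; exact Finset.mem_inter.2 ⟨hip, hi⟩)
          simp only [hz, hiR, dif_neg, not_false_iff, hip, if_neg]
          exact hxq i hi
      exact (hFdisj p (hJF hp) q (hJF hq) hpq).ne_of_mem hzp hzq rfl
    -- transfer to ℕ → L
    set l : List ι := R.toList with hl
    set e : ι → ℕ := fun i => l.idxOf i with he
    set r : ℕ → ι := fun n => l.getD n (Classical.arbitrary ι) with hr
    have hre : ∀ i ∈ R, r (e i) = i := by
      intro i hi
      have hmem : i ∈ l := by simpa [hl] using hi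
      have hlt : l.idxOf i < l.length := List.idxOf_lt_length_iff.2 hmem
      simp only [hr, he]
      rw [List.getD_eq_getElem _ _ hlt]
      exact List.getElem_idxOf hlt
    set T : Finset ι × (ι → Set L) → Set (ℕ → L) :=
      fun p => {y | ∀ i ∈ R, y (e i) ∈ p.2 i} with hT
    have hTopen : ∀ p ∈ J, IsOpen (T p) := by
      intro p hp
      have : T p = ⋂ i ∈ R, (fun y : ℕ → L => y (e i)) ⁻¹' p.2 i := by
        ext y; simp [hT]
      rw [this]
      exact isOpen_biInter_finset fun i hi =>
        ((hFGood (hJF hp)).1 i (hRsub p hp hi)).preimage (continuous_apply _)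
    have hTne : ∀ p ∈ J, (T p).Nonempty := by
      intro p hp
      obtain ⟨xp, hxp⟩ := (hFGood (hJF hp)).2.1
      refine ⟨fun n => xp (r n), fun i hi => ?_⟩
      show xp (r (e i)) ∈ p.2 i
      rw [hre i hi]
      exact hxp i (hRsub p hp hi)
    have hTdisj : ∀ p ∈ J, ∀ q ∈ J, p ≠ q → Disjoint (T p) (T q) := by
      intro p hp q hq hpq
      obtain ⟨i, hiR, hi⟩ := hwit p hp q hq hpq
      rw [Set.disjoint_left]
      intro y hyp hyq
      have : y (e i) ∈ p.2 i ∩ q.2 i := ⟨hyp i hiR, hyq i hiR⟩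
      rw [hi] at this
      exact this
    have hTinj : Set.InjOn T J := by
      intro p hp q hq hT'
      by_contra hpq
      obtain ⟨y, hy⟩ := hTne p hp
      exact (hTdisj p hp q hq hpq).ne_of_mem hy (hT' ▸ hy) rfl
    have h𝒰 : (T '' J).Countable := by
      apply hccc
      · rintro W ⟨p, hp, rfl⟩
        exact ⟨hTopen p hp, hTne p hp⟩
      · rintro W₁ ⟨p, hp, rfl⟩ W₂ ⟨q, hq, rfl⟩ hne
        exact hTdisj p hp q hq (fun h => hne (by rw [h]))
    exact hJunc (Set.countable_of_injective_of_countable_image hTinj h𝒰)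
  -- assemble V and M
  refine ⟨⋃ p ∈ F, Box p, ?_, ?_, ?_, ⋃ p ∈ F, (↑p.1 : Set ι), ?_, ?_⟩
  · exact Set.iUnion₂_subset fun p hp => (hFGood hp).2.2
  · exact isOpen_biUnion fun p hp => hBoxOpen p (hFGood hp).1
  · -- density
    rw [dense_iff_inter_open]
    rintro W hW hWne
    obtain ⟨W', hW', rfl⟩ := isOpen_induced_iff.1 hW
    obtain ⟨⟨x, hxU⟩, hxW⟩ := hWne
    have hxUW : x ∈ U ∩ W' := ⟨hxU, hxW⟩
    obtain ⟨I, u, hu, hsub⟩ := isOpen_pi_iff.1 (hU.inter hW') x hxUW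
    set q : Finset ι × (ι → Set L) := (I, u) with hq
    have hBoxq : Box q = (↑I : Set ι).pi u := by
      ext z; simp [hBox, Set.mem_pi, hq]
    have hxq : x ∈ Box q := fun i hi => (hu i hi).2
    have hqGood : q ∈ Good := ⟨fun i hi => (hu i hi).1, ⟨x, hxq⟩,
      (hBoxq ▸ hsub).trans Set.inter_subset_left⟩
    -- q's box must meet some box of F
    have hmeet : ∃ p ∈ F, ¬ Disjoint (Box q) (Box p) := by
      by_contra hcon
      push_neg at hcon
      have hins : insert q F ∈ {F : Set (Finset ι × (ι → Set L)) | F ⊆ Good ∧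
          ∀ p ∈ F, ∀ q ∈ F, p ≠ q → Disjoint (Box p) (Box q)} := by
        refine ⟨Set.insert_subset hqGood hFGood, ?_⟩
        rintro p₁ hp₁ p₂ hp₂ hne
        rcases hp₁ with rfl | hp₁
        · rcases hp₂ with rfl | hp₂
          · exact absurd rfl hne
          · exact hcon p₂ hp₂
        · rcases hp₂ with rfl | hp₂
          · exact (hcon p₁ hp₁).symm
          · exact hFdisj p₁ hp₁ p₂ hp₂ hne
      have hqF : q ∈ F := hFmax.2 hins (Set.subset_insert q F) (Set.mem_insert q F)
      exact Set.not_disjoint_iff.2 ⟨x, hxq, hxq⟩ (hcon q hqF)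
    obtain ⟨p, hpF, hpd⟩ := hmeet
    obtain ⟨z, hzq, hzp⟩ := Set.not_disjoint_iff.1 hpd
    have hzU : z ∈ U := (hFGood hpF).2.2 hzp
    refine ⟨⟨z, hzU⟩, ?_, ?_⟩
    · show z ∈ W'
      exact (((hBoxq ▸ hsub) hzq)).2
    · exact Set.mem_preimage.2 (Set.mem_biUnion hpF hzp)
  · exact Set.Countable.biUnion hFc fun p _ => p.1.countable_toSet
  · -- determination
    intro x hx y hy
    obtain ⟨p, hp, hxp⟩ := Set.mem_iUnion₂.1 hx
    have hyp : y ∉ Box p := fun h => hy (Set.mem_biUnion hp h)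
    simp only [hBox, Set.mem_setOf_eq, not_forall] at hyp
    obtain ⟨i, hi, hyi⟩ := hyp
    exact ⟨i, Set.mem_biUnion hp hi, fun he => hyi (he ▸ hxp i hi)⟩
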